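/- Let q ∈ ℝ with q ≠ 0, and let R_q be the universal unital ℝ-algebra with generators x, y and the single relation x·y = q • (y·x) (the coordinate algebra of the quantum plane, i.e., the quotient of the free ℝ-algebra on two generators by the two-sided ideal generated by this relation). Put u := x·y. Then the family consisting of the elements x^i · u^j (i ≥ 1, j ≥ 0), y^i · u^j (i ≥ 1, j ≥ 0), and u^j (j ≥ 0) is a basis of R_q as an ℝ-vector space. -/

import Mathlib

open FreeAlgebra

/-- The defining relation of the coordinate algebra of the quantum plane:
`x·y = q • (y·x)`, with `x = X 0`, `y = X 1`. -/
inductive QPlaneRel (q : ℝ) : FreeAlgebra ℝ (Fin 2) → FreeAlgebra ℝ (Fin 2) → Prop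
  | xy : QPlaneRel q (ι ℝ 0 * ι ℝ 1) (q • (ι ℝ 1 * ι ℝ 0))

/-- The coordinate algebra `R_q` of the quantum plane. -/
noncomputable abbrev QPlane (q : ℝ) : Type := RingQuot (QPlaneRel q)

/-- The generator `x` of `R_q`. -/
noncomputable def qpX (q : ℝ) : QPlane q := RingQuot.mkAlgHom ℝ (QPlaneRel q) (ι ℝ 0)

/-- The generator `y` of `R_q`. -/
noncomputable def qpY (q : ℝ) : QPlane q := RingQuot.mkAlgHom ℝ (QPlaneRel q) (ι ℝ 1)

/-- The element `u := x·y` of `R_q`. -/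
noncomputable def qpU (q : ℝ) : QPlane q := qpX q * qpY q

/-- The family of elements `x^i u^j` (`i ≥ 1`), `y^i u^j` (`i ≥ 1`), `u^j` of `R_q`. -/
noncomputable def qpFamily (q : ℝ) :
    ({i : ℕ // 1 ≤ i} × ℕ) ⊕ ({i : ℕ // 1 ≤ i} × ℕ) ⊕ ℕ → QPlane q :=
  Sum.elim (fun p => qpX q ^ (p.1 : ℕ) * qpU q ^ p.2)
    (Sum.elim (fun p => qpY q ^ (p.1 : ℕ) * qpU q ^ p.2) (fun j => qpU q ^ j))


namespace QPB
open MvPolynomial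

noncomputable abbrev P := MvPolynomial (Fin 2) ℝ

noncomputable def σop (q : ℝ) : P →ₐ[ℝ] P := aeval ![X 0, q • X 1]

noncomputable def Xop (q : ℝ) : Module.End ℝ P :=
  (LinearMap.mulLeft ℝ (X 0 : P)).comp (σop q).toLinearMap

noncomputable def Yop : Module.End ℝ P := LinearMap.mulLeft ℝ (X 1 : P)

noncomputable def m (a b : ℕ) : P := X 0 ^ a * X 1 ^ b

lemma σop_m (q : ℝ) (a b : ℕ) : σop q (m a b) = q ^ b • m a b := by
  simp [σop, m, smul_pow, mul_smul_comm]

lemma Xop_m (q : ℝ) (a b : ℕ) : Xop q (m a b) = q ^ b • m (a + 1) b := by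
  rw [Xop, LinearMap.comp_apply, AlgHom.toLinearMap_apply, σop_m, LinearMap.mulLeft_apply,
    mul_smul_comm]
  congr 1
  simp only [m]
  ring

lemma Yop_m (a b : ℕ) : Yop (m a b) = m a (b + 1) := by
  simp only [Yop, LinearMap.mulLeft_apply, m]
  ring

lemma comm_op (q : ℝ) : Xop q * Yop = q • (Yop * Xop q) := by
  apply LinearMap.ext; intro p
  simp only [Module.End.mul_apply, LinearMap.smul_apply, Xop, Yop, LinearMap.comp_apply,
    AlgHom.toLinearMap_apply, LinearMap.mulLeft_apply, map_mul, σop]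
  simp only [aeval_X, Matrix.cons_val_one, Matrix.head_cons, Matrix.cons_val_zero]
  rw [smul_mul_assoc, mul_smul_comm]
  congr 1
  ring

noncomputable def φ (q : ℝ) : QPlane q →ₐ[ℝ] Module.End ℝ P :=
  RingQuot.liftAlgHom ℝ ⟨FreeAlgebra.lift ℝ ![Xop q, Yop], by
    rintro _ _ ⟨⟩
    simp only [map_mul, map_smul, lift_ι_apply, Matrix.cons_val_zero, Matrix.cons_val_one,
      Matrix.head_cons]
    exact comm_op q⟩

lemma φ_X (q : ℝ) : φ q (qpX q) = Xop q := by
  simp [φ, qpX, RingQuot.liftAlgHom_mkAlgHom_apply]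

lemma φ_Y (q : ℝ) : φ q (qpY q) = Yop := by
  simp [φ, qpY, RingQuot.liftAlgHom_mkAlgHom_apply]

noncomputable def ψ (q : ℝ) : QPlane q →ₗ[ℝ] P where
  toFun r := φ q r 1
  map_add' a b := by simp
  map_smul' r a := by simp


lemma Xop_pow_m (q : ℝ) (i a b : ℕ) : (Xop q ^ i) (m a b) = q ^ (i * b) • m (a + i) b := by
  induction i with
  | zero => simp
  | succ i ih =>
    rw [pow_succ', Module.End.mul_apply, ih, map_smul, Xop_m, smul_smul, ← pow_add]
    congr 2
    ring

lemma Yop_pow_m (i a b : ℕ) : (Yop ^ i) (m a b) = m a (b + i) := by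
  induction i with
  | zero => simp
  | succ i ih => rw [pow_succ', Module.End.mul_apply, ih, Yop_m]; congr 1

lemma m_zero : m 0 0 = 1 := by simp [m]

lemma XY_pow_one (q : ℝ) (hq : q ≠ 0) (j : ℕ) :
    ∃ c : ℝˣ, ((Xop q * Yop) ^ j) 1 = (c : ℝ) • m j j := by
  induction j with
  | zero => exact ⟨1, by simp [m_zero]⟩
  | succ j ih =>
    obtain ⟨c, hc⟩ := ih
    refine ⟨c * Units.mk0 (q ^ (j + 1)) (pow_ne_zero _ hq), ?_⟩
    rw [pow_succ', Module.End.mul_apply, hc, map_smul, Module.End.mul_apply, Yop_m, Xop_m,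
      smul_smul]
    simp [mul_comm]

lemma φ_U (q : ℝ) : φ q (qpU q) = Xop q * Yop := by
  rw [qpU, map_mul, φ_X, φ_Y]

/-- exponent pair of each family member -/
def gp : ({i : ℕ // 1 ≤ i} × ℕ) ⊕ ({i : ℕ // 1 ≤ i} × ℕ) ⊕ ℕ → ℕ × ℕ :=
  Sum.elim (fun p => (p.2 + p.1.1, p.2)) (Sum.elim (fun p => (p.2, p.2 + p.1.1)) fun j => (j, j))

lemma gp_inj : Function.Injective gp := by
  rintro (⟨⟨i, hi⟩, j⟩ | ⟨⟨i, hi⟩, j⟩ | j) (⟨⟨i', hi'⟩, j'⟩ | ⟨⟨i', hi'⟩, j'⟩ | j') h <;>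
    simp only [gp, Sum.elim_inl, Sum.elim_inr, Prod.mk.injEq] at h <;>
    simp_all <;> omega

noncomputable def gF (idx : ({i : ℕ // 1 ≤ i} × ℕ) ⊕ ({i : ℕ // 1 ≤ i} × ℕ) ⊕ ℕ) :
    Fin 2 →₀ ℕ :=
  Finsupp.single 0 (gp idx).1 + Finsupp.single 1 (gp idx).2

lemma gF_inj : Function.Injective gF := by
  intro idx idx' h
  apply gp_inj
  have h0 := congrFun (congrArg (fun f : Fin 2 →₀ ℕ => (f : Fin 2 → ℕ)) h) 0
  have h1 := congrFun (congrArg (fun f : Fin 2 →₀ ℕ => (f : Fin 2 → ℕ)) h) 1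
  simp only [gF, Finsupp.coe_add, Pi.add_apply, Finsupp.single_apply] at h0 h1
  norm_num at h0 h1
  exact Prod.ext h0 h1

lemma m_eq_monomial (a b : ℕ) :
    m a b = monomial (Finsupp.single (0 : Fin 2) a + Finsupp.single 1 b) (1 : ℝ) := by
  rw [m, X_pow_eq_monomial, X_pow_eq_monomial, monomial_mul, one_mul]

lemma psi_family (q : ℝ) (hq : q ≠ 0) (idx) :
    ∃ c : ℝˣ, ψ q (qpFamily q idx) = (c : ℝ) • monomial (gF idx) (1 : ℝ) := by
  rcases idx with ⟨⟨i, hi⟩, j⟩ | ⟨⟨i, hi⟩, j⟩ | j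
  · obtain ⟨c, hc⟩ := XY_pow_one q hq j
    refine ⟨c * Units.mk0 (q ^ (i * j)) (pow_ne_zero _ hq), ?_⟩
    show φ q (qpX q ^ i * qpU q ^ j) 1 = _
    rw [map_mul, map_pow, map_pow, φ_X, φ_U, Module.End.mul_apply, hc, map_smul, Xop_pow_m]
    simp only [gp, gF, Sum.elim_inl]
    rw [← m_eq_monomial, smul_smul]
    norm_num [mul_comm]
  · obtain ⟨c, hc⟩ := XY_pow_one q hq j
    refine ⟨c, ?_⟩
    show φ q (qpY q ^ i * qpU q ^ j) 1 = _
    rw [map_mul, map_pow, map_pow, φ_Y, φ_U, Module.End.mul_apply, hc, map_smul, Yop_pow_m]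
    simp only [gp, gF, Sum.elim_inr, Sum.elim_inl]
    rw [← m_eq_monomial]
  · obtain ⟨c, hc⟩ := XY_pow_one q hq j
    refine ⟨c, ?_⟩
    show φ q (qpU q ^ j) 1 = _
    rw [map_pow, φ_U, hc]
    simp only [gp, gF, Sum.elim_inr]
    rw [← m_eq_monomial]

lemma indep (q : ℝ) (hq : q ≠ 0) : LinearIndependent ℝ (qpFamily q) := by
  choose c hc using psi_family q hq
  have hM : LinearIndependent ℝ (fun idx => (monomial (gF idx) (1 : ℝ) : P)) := by
    have := (basisMonomials (Fin 2) ℝ).linearIndependent.comp gF gF_inj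
    simpa [coe_basisMonomials, Function.comp_def] using this
  have h2 : LinearIndependent ℝ (fun idx => ψ q (qpFamily q idx)) := by
    have := hM.units_smul c
    convert this using 1
    funext idx
    simp [Pi.smul_apply', hc idx, Units.smul_def]
  exact LinearIndependent.of_comp (ψ q) h2

end QPB

section Span
variable (q : ℝ)

noncomputable abbrev S := Submodule.span ℝ (Set.range (qpFamily q))

lemma rel_q : qpX q * qpY q = q • (qpY q * qpX q) := by
  have := RingQuot.mkAlgHom_rel ℝ (QPlaneRel.xy (q := q))
  simpa [qpX, qpY, map_mul, map_smul] using this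

lemma yx_eq (hq : q ≠ 0) : qpY q * qpX q = q⁻¹ • qpU q := by
  rw [qpU, rel_q, smul_smul, inv_mul_cancel₀ hq, one_smul]

lemma x_ypow (i : ℕ) : qpX q * qpY q ^ (i + 1) = q ^ i • (qpY q ^ i * qpU q) := by
  induction i with
  | zero => simp [qpU]
  | succ i ih =>
    rw [pow_succ' (qpY q) (i + 1), ← mul_assoc, rel_q, smul_mul_assoc, mul_assoc, ih,
      mul_smul_comm, smul_smul, ← mul_assoc, ← pow_succ', ← pow_succ']

lemma y_xpow (hq : q ≠ 0) (i : ℕ) :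
    qpY q * qpX q ^ (i + 1) = (q⁻¹) ^ (i + 1) • (qpX q ^ i * qpU q) := by
  induction i with
  | zero => simp [yx_eq q hq]
  | succ i ih =>
    rw [pow_succ' (qpX q) (i + 1), ← mul_assoc, yx_eq q hq, smul_mul_assoc,
      show qpU q * qpX q ^ (i + 1) = qpX q * (qpY q * qpX q ^ (i + 1)) from by
        rw [qpU, mul_assoc],
      ih, mul_smul_comm, smul_smul, ← mul_assoc, ← pow_succ', ← pow_succ']

lemma one_mem_S : (1 : QPlane q) ∈ S q := by
  have : qpFamily q (Sum.inr (Sum.inr 0)) = 1 := by simp [qpFamily]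
  exact this ▸ Submodule.subset_span (Set.mem_range_self _)

lemma x_mul_mem (hq : q ≠ 0) : ∀ s ∈ S q, qpX q * s ∈ S q := by
  intro s hs
  induction hs using Submodule.span_induction with
  | mem s hs =>
    obtain ⟨idx, rfl⟩ := hs
    rcases idx with ⟨⟨i, hi⟩, j⟩ | ⟨⟨i, hi⟩, j⟩ | j
    · apply Submodule.subset_span
      refine ⟨Sum.inl (⟨i + 1, by omega⟩, j), ?_⟩
      simp only [qpFamily, Sum.elim_inl, ← mul_assoc, ← pow_succ']
    · obtain ⟨k, rfl⟩ : ∃ k, i = k + 1 := ⟨i - 1, by omega⟩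
      have : qpX q * (qpY q ^ (k + 1) * qpU q ^ j)
          = q ^ k • (qpY q ^ k * qpU q ^ (j + 1)) := by
        rw [← mul_assoc, x_ypow, smul_mul_assoc, mul_assoc, ← pow_succ']
      rw [qpFamily, Sum.elim_inr, Sum.elim_inl]
      simp only at this ⊢
      rw [this]
      apply Submodule.smul_mem
      apply Submodule.subset_span
      rcases Nat.eq_zero_or_pos k with rfl | hk
      · exact ⟨Sum.inr (Sum.inr (j + 1)), by simp [qpFamily]⟩
      · exact ⟨Sum.inr (Sum.inl (⟨k, hk⟩, j + 1)), by simp [qpFamily]⟩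
    · apply Submodule.subset_span
      refine ⟨Sum.inl (⟨1, le_refl 1⟩, j), ?_⟩
      simp only [qpFamily, Sum.elim_inl, Sum.elim_inr, pow_one]
  | zero => simp
  | add a b _ _ ha hb => rw [mul_add]; exact add_mem ha hb
  | smul r a _ ha => rw [mul_smul_comm]; exact Submodule.smul_mem _ r ha

lemma y_mul_mem (hq : q ≠ 0) : ∀ s ∈ S q, qpY q * s ∈ S q := by
  intro s hs
  induction hs using Submodule.span_induction with
  | mem s hs =>
    obtain ⟨idx, rfl⟩ := hs
    rcases idx with ⟨⟨i, hi⟩, j⟩ | ⟨⟨i, hi⟩, j⟩ | j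
    · obtain ⟨k, rfl⟩ : ∃ k, i = k + 1 := ⟨i - 1, by omega⟩
      have : qpY q * (qpX q ^ (k + 1) * qpU q ^ j)
          = (q⁻¹) ^ (k + 1) • (qpX q ^ k * qpU q ^ (j + 1)) := by
        rw [← mul_assoc, y_xpow q hq, smul_mul_assoc, mul_assoc, ← pow_succ']
      rw [qpFamily, Sum.elim_inl]
      simp only at this ⊢
      rw [this]
      apply Submodule.smul_mem
      apply Submodule.subset_span
      rcases Nat.eq_zero_or_pos k with rfl | hk
      · exact ⟨Sum.inr (Sum.inr (j + 1)), by simp [qpFamily]⟩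
      · exact ⟨Sum.inl (⟨k, hk⟩, j + 1), by simp [qpFamily]⟩
    · apply Submodule.subset_span
      refine ⟨Sum.inr (Sum.inl (⟨i + 1, by omega⟩, j)), ?_⟩
      simp only [qpFamily, Sum.elim_inr, Sum.elim_inl, ← mul_assoc, ← pow_succ']
    · apply Submodule.subset_span
      refine ⟨Sum.inr (Sum.inl (⟨1, le_refl 1⟩, j)), ?_⟩
      simp only [qpFamily, Sum.elim_inl, Sum.elim_inr, pow_one]
  | zero => simp
  | add a b _ _ ha hb => rw [mul_add]; exact add_mem ha hb
  | smul r a _ ha => rw [mul_smul_comm]; exact Submodule.smul_mem _ r ha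

noncomputable def T : Subalgebra ℝ (QPlane q) where
  carrier := {a | ∀ s ∈ S q, a * s ∈ S q}
  mul_mem' := by
    intro a b ha hb s hs
    rw [mul_assoc]
    exact ha _ (hb s hs)
  one_mem' := by intro s hs; rwa [one_mul]
  add_mem' := by
    intro a b ha hb s hs
    rw [add_mul]
    exact add_mem (ha s hs) (hb s hs)
  zero_mem' := by intro s hs; rw [zero_mul]; exact zero_mem _
  algebraMap_mem' := by
    intro r s hs
    rw [← Algebra.smul_def r s]
    exact Submodule.smul_mem _ r hs

lemma span_top (hq : q ≠ 0) : S q = ⊤ := by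
  rw [eq_top_iff]
  intro a _
  have hT : ∀ b : QPlane q, b ∈ T q := by
    intro b
    obtain ⟨f, rfl⟩ := RingQuot.mkAlgHom_surjective ℝ (QPlaneRel q) b
    induction f using FreeAlgebra.induction with
    | grade0 r => rw [AlgHom.commutes]; exact (T q).algebraMap_mem r
    | grade1 x =>
      fin_cases x
      · exact x_mul_mem q hq
      · exact y_mul_mem q hq
    | mul a b ha hb => rw [map_mul]; exact mul_mem ha hb
    | add a b ha hb => rw [map_add]; exact add_mem ha hb
  have := hT a 1 (one_mem_S q)
  rwa [mul_one] at this
end Span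

/-- For `q ≠ 0`, the family consisting of `x^i u^j` (`i ≥ 1, j ≥ 0`),
`y^i u^j` (`i ≥ 1, j ≥ 0`) and `u^j` (`j ≥ 0`) is a basis of `R_q` as an `ℝ`-vector space:
it is linearly independent and spans `R_q`. -/
theorem qplane_basis (q : ℝ) (hq : q ≠ 0) :
    LinearIndependent ℝ (qpFamily q) ∧
      Submodule.span ℝ (Set.range (qpFamily q)) = ⊤ := by
  exact ⟨QPB.indep q hq, span_top q hq⟩
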